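/- Let γ > 0, β > 0, and m > 1. Suppose y : (0, ∞) → [0, ∞) is differentiable and satisfies y'(t) + γ·y(t)^m ≤ β for all t > 0 (with possibly y(t) → ∞ as t → 0⁺). Then for all t > 0, y(t) ≤ (β/γ)^(1/m) + (γ·(m−1)·t)^(−1/(m−1)). -/

import Mathlib

open Real Set Filter Topology

private lemma rpow_superadd {a b p : ℝ} (ha : 0 < a) (hb : 0 < b) (hp : 1 ≤ p) :
    a ^ p + b ^ p ≤ (a + b) ^ p := by
  have hab : 0 < a + b := by linarith
  have hp1 : (0:ℝ) ≤ p - 1 := by linarith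
  have h1 : (a + b) ^ p = a * (a + b) ^ (p - 1) + b * (a + b) ^ (p - 1) := by
    rw [← add_mul, ← Real.rpow_one_add' hab.le (by intro h; linarith : 1 + (p-1) ≠ 0)]
    ring_nf
  have h2 : a ^ p = a * a ^ (p - 1) := by
    rw [← Real.rpow_one_add' ha.le (by intro h; linarith : 1 + (p-1) ≠ 0)]
    ring_nf
  have h3 : b ^ p = b * b ^ (p - 1) := by
    rw [← Real.rpow_one_add' hb.le (by intro h; linarith : 1 + (p-1) ≠ 0)]
    ring_nf
  rw [h1, h2, h3]
  exact add_le_add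
    (mul_le_mul_of_nonneg_left (Real.rpow_le_rpow ha.le (by linarith) hp1) ha.le)
    (mul_le_mul_of_nonneg_left (Real.rpow_le_rpow hb.le (by linarith) hp1) hb.le)

private lemma temam_key (γ β m : ℝ) (y : ℝ → ℝ)
    (hγ : 0 < γ) (hβ : 0 < β) (hm : 1 < m)
    (hy_nonneg : ∀ t : ℝ, 0 < t → 0 ≤ y t)
    (hy_diff : ∀ t : ℝ, 0 < t → DifferentiableAt ℝ y t)
    (hineq : ∀ t : ℝ, 0 < t → deriv y t + γ * y t ^ m ≤ β)
    (a t₀ : ℝ) (ha : 0 < a) (hat : a < t₀) :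
    y t₀ ≤ (β / γ) ^ (1 / m) + (γ * (m - 1) * (t₀ - a)) ^ (-(1 / (m - 1))) := by
  have hm1 : (0:ℝ) < m - 1 := by linarith
  have hgm1 : 0 < γ * (m - 1) := mul_pos hγ hm1
  set c : ℝ := (β / γ) ^ (1 / m) with hc_def
  have hbg : 0 < β / γ := div_pos hβ hγ
  have hc_pos : 0 < c := Real.rpow_pos_of_pos hbg _
  have hcm : γ * c ^ m = β := by
    rw [hc_def, ← Real.rpow_mul hbg.le, one_div, inv_mul_cancel₀ (by positivity : m ≠ 0),
      Real.rpow_one, mul_div_cancel₀ β hγ.ne']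
  set g : ℝ → ℝ := fun t => (γ * (m - 1) * (t - a)) ^ (-(1 / (m - 1))) with hg_def
  set z : ℝ → ℝ := fun t => c + g t with hz_def
  have hu_pos : ∀ t, a < t → 0 < γ * (m - 1) * (t - a) := fun t ht =>
    mul_pos hgm1 (by linarith)
  have hg_pos : ∀ t, a < t → 0 < g t := fun t ht => Real.rpow_pos_of_pos (hu_pos t ht) _
  have hz_pos : ∀ t, a < t → 0 < z t := fun t ht => add_pos hc_pos (hg_pos t ht)
  -- derivative of z
  have hexp : -(1 / (m - 1)) - 1 = -(1 / (m - 1)) * m := by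
    field_simp
    ring
  have hz_deriv : ∀ t, a < t → HasDerivAt z (-γ * g t ^ m) t := by
    intro t ht
    have hu : HasDerivAt (fun s => γ * (m - 1) * (s - a)) (γ * (m - 1)) t := by
      simpa using ((hasDerivAt_id t).sub_const a).const_mul (γ * (m - 1))
    have h2 : HasDerivAt (fun x : ℝ => x ^ (-(1 / (m - 1))))
        (-(1 / (m - 1)) * (γ * (m - 1) * (t - a)) ^ (-(1 / (m - 1)) - 1))
        (γ * (m - 1) * (t - a)) :=
      Real.hasDerivAt_rpow_const (Or.inl (ne_of_gt (hu_pos t ht)))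
    have h3 := h2.comp t hu
    have hval : -(1 / (m - 1)) * (γ * (m - 1) * (t - a)) ^ (-(1 / (m - 1)) - 1) * (γ * (m - 1))
        = -γ * g t ^ m := by
      have h4 : g t ^ m = (γ * (m - 1) * (t - a)) ^ (-(1 / (m - 1)) - 1) := by
        rw [hg_def, ← Real.rpow_mul (hu_pos t ht).le, ← hexp]
      rw [h4]
      field_simp
    have h5 : HasDerivAt g (-γ * g t ^ m) t := by
      rw [hg_def]; rw [hval] at h3; exact h3
    simpa [hz_def] using (h5.const_add c)
  -- supersolution inequality
  have hzm : ∀ t, a < t → β ≤ γ * z t ^ m - γ * g t ^ m := by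
    intro t ht
    have := rpow_superadd hc_pos (hg_pos t ht) hm.le
    have h6 : γ * (c ^ m + g t ^ m) ≤ γ * z t ^ m :=
      mul_le_mul_of_nonneg_left this hγ.le
    nlinarith [hcm]
  -- find a point s near a where y s ≤ z s
  have hy_contOn : ContinuousOn y (Icc a t₀) := fun x hx =>
    ((hy_diff x (lt_of_lt_of_le ha hx.1)).continuousAt).continuousWithinAt
  obtain ⟨x₀, hx₀, hmax'⟩ :=
    isCompact_Icc.exists_isMaxOn (nonempty_Icc.2 hat.le) hy_contOn
  have hmax : ∀ x ∈ Icc a t₀, y x ≤ y x₀ := fun x hx => hmax' hx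
  set B : ℝ := y x₀ + 1 with hB_def
  have hB : 0 < B := by
    have := hy_nonneg x₀ (lt_of_lt_of_le ha hx₀.1); linarith
  set ε : ℝ := min (t₀ - a) ((γ * (m - 1))⁻¹ * B ^ (-(m - 1))) with hε_def
  have hε_pos : 0 < ε := lt_min (by linarith) (by positivity)
  set s : ℝ := a + ε with hs_def
  have has : a < s := by simp [hs_def]; linarith
  have hs0 : 0 < s := ha.trans has
  have hst : s ≤ t₀ := by
    have := min_le_left (t₀ - a) ((γ * (m - 1))⁻¹ * B ^ (-(m - 1)))
    simp only [hs_def]; linarith [hε_def ▸ this]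
  have hgsB : B ≤ g s := by
    have hu_le : γ * (m - 1) * (s - a) ≤ B ^ (-(m - 1)) := by
      have h7 : ε ≤ (γ * (m - 1))⁻¹ * B ^ (-(m - 1)) := min_le_right _ _
      have : γ * (m - 1) * ε ≤ γ * (m - 1) * ((γ * (m - 1))⁻¹ * B ^ (-(m - 1))) :=
        mul_le_mul_of_nonneg_left h7 hgm1.le
      rw [← mul_assoc, mul_inv_cancel₀ hgm1.ne'] at this
      simpa [hs_def] using this
    have h8 : (B ^ (-(m - 1))) ^ (-(1 / (m - 1))) ≤ g s :=
      Real.rpow_le_rpow_of_nonpos (hu_pos s has) hu_le (neg_nonpos.2 (by positivity))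
    calc B = (B ^ (-(m - 1))) ^ (-(1 / (m - 1))) := by
            rw [← Real.rpow_mul hB.le]
            rw [show -(m - 1) * -(1 / (m - 1)) = 1 by field_simp, Real.rpow_one]
      _ ≤ g s := h8
  have hyz_s : y s ≤ z s := by
    have : y s ≤ y x₀ := hmax s ⟨has.le, hst⟩
    have : y s < B := by linarith
    have := hgsB
    simp only [hz_def]; nlinarith
  -- sup argument
  by_contra hcon
  push_neg at hcon
  set S : Set ℝ := {t | t ∈ Icc s t₀ ∧ y t ≤ z t} with hS_def
  have hsS : s ∈ S := ⟨⟨le_refl s, hst⟩, hyz_s⟩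
  have hS_ne : S.Nonempty := ⟨s, hsS⟩
  have hS_bdd : BddAbove S := ⟨t₀, fun x hx => hx.1.2⟩
  set τ : ℝ := sSup S with hτ_def
  have hsτ : s ≤ τ := le_csSup hS_bdd hsS
  have hτt₀ : τ ≤ t₀ := csSup_le hS_ne fun x hx => hx.1.2
  have haτ : a < τ := lt_of_lt_of_le has hsτ
  have hτ0 : 0 < τ := ha.trans haτ
  have hyzτ : y τ ≤ z τ := by
    have hτcl : τ ∈ closure S := csSup_mem_closure hS_ne hS_bdd
    have hne : (𝓝[S] τ).NeBot := mem_closure_iff_nhdsWithin_neBot.1 hτcl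
    have hca : ContinuousAt (fun t => y t - z t) τ :=
      ((hy_diff τ hτ0).continuousAt).sub (hz_deriv τ haτ).differentiableAt.continuousAt
    have htd : Tendsto (fun t => y t - z t) (𝓝[S] τ) (𝓝 (y τ - z τ)) :=
      hca.continuousWithinAt.tendsto
    have hle : y τ - z τ ≤ 0 :=
      le_of_tendsto htd (eventually_nhdsWithin_of_forall fun x hx => sub_nonpos.2 hx.2)
    linarith
  have hττ : τ < t₀ := by
    rcases lt_or_eq_of_le hτt₀ with h | h
    · exact h
    · exfalso; rw [h] at hyzτ; exact absurd hyzτ (not_le.2 hcon)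
  -- y > z on (τ, t₀]
  have hgt : ∀ x, τ < x → x ≤ t₀ → z x < y x := by
    intro x hx1 hx2
    by_contra hle
    push_neg at hle
    have : x ∈ S := ⟨⟨hsτ.trans hx1.le, hx2⟩, hle⟩
    exact absurd (le_csSup hS_bdd this) (not_le.2 hx1)
  -- w := y - z is antitone on [τ, t₀]
  have hanti : AntitoneOn (fun t => y t - z t) (Icc τ t₀) := by
    apply antitoneOn_of_deriv_nonpos (convex_Icc τ t₀)
    · intro x hx
      exact (((hy_diff x (hτ0.trans_le hx.1)).continuousAt).sub
        (hz_deriv x (haτ.trans_le hx.1)).differentiableAt.continuousAt).continuousWithinAt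
    · intro x hx
      rw [interior_Icc] at hx
      exact (((hy_diff x (hτ0.trans hx.1)).sub
        (hz_deriv x (haτ.trans hx.1)).differentiableAt)).differentiableWithinAt
    · intro x hx
      rw [interior_Icc] at hx
      have hax : a < x := haτ.trans hx.1
      have hx0 : 0 < x := hτ0.trans hx.1
      rw [deriv_fun_sub (hy_diff x hx0) (hz_deriv x hax).differentiableAt,
        (hz_deriv x hax).deriv]
      have h9 := hineq x hx0
      have h10 : z x ^ m ≤ y x ^ m :=
        Real.rpow_le_rpow (hz_pos x hax).le (hgt x hx.1 hx.2.le).le (by linarith : (0:ℝ) ≤ m)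
      have h11 := hzm x hax
      nlinarith
  have := hanti ⟨le_refl τ, hττ.le⟩ ⟨hττ.le, le_refl t₀⟩ hττ.le
  simp only [hz_def] at *
  linarith

theorem stmt_6 (γ β m : ℝ) (y : ℝ → ℝ)
    (hγ : 0 < γ) (hβ : 0 < β) (hm : 1 < m)
    (hy_nonneg : ∀ t : ℝ, 0 < t → 0 ≤ y t)
    (hy_diff : ∀ t : ℝ, 0 < t → DifferentiableAt ℝ y t)
    (hineq : ∀ t : ℝ, 0 < t → deriv y t + γ * y t ^ m ≤ β) :
    ∀ t : ℝ, 0 < t →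
      y t ≤ (β / γ) ^ (1 / m) + (γ * (m - 1) * t) ^ (-(1 / (m - 1))) := by
  intro t ht
  have hm1 : (0:ℝ) < m - 1 := by linarith
  have hu0 : γ * (m - 1) * t ≠ 0 := by positivity
  have hcont : ContinuousAt (fun a : ℝ =>
      (β / γ) ^ (1 / m) + (γ * (m - 1) * (t - a)) ^ (-(1 / (m - 1)))) 0 := by
    apply ContinuousAt.add continuousAt_const
    have h1 : ContinuousAt (fun a : ℝ => γ * (m - 1) * (t - a)) 0 := by fun_prop
    exact h1.rpow_const (Or.inl (by simpa using hu0))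
  have htend : Tendsto (fun a : ℝ =>
      (β / γ) ^ (1 / m) + (γ * (m - 1) * (t - a)) ^ (-(1 / (m - 1)))) (𝓝[>] 0)
      (𝓝 ((β / γ) ^ (1 / m) + (γ * (m - 1) * t) ^ (-(1 / (m - 1))))) := by
    have h := hcont.tendsto.mono_left (nhdsWithin_le_nhds (s := Set.Ioi (0:ℝ)))
    simpa using h
  refine ge_of_tendsto htend ?_
  filter_upwards [Ioo_mem_nhdsGT_of_mem (Set.mem_Ico.2 ⟨le_refl 0, ht⟩)] with a ha
  exact temam_key γ β m y hγ hβ hm hy_nonneg hy_diff hineq a t ha.1 ha.2
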